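/- Let K and T be symmetric positive definite n×n real matrices, let k_B > 0, and let Σ be the (unique) positive definite solution of the algebraic Lyapunov equation K Σ + Σ K = 2 k_B T. Then K and Σ commute if and only if K and T commute; moreover, in that case Σ = k_B T K⁻¹. -/

import Mathlib

open Matrix

lemma lyap_zero {n : ℕ} (K X : Matrix (Fin n) (Fin n) ℝ) (hK : K.PosDef)
    (hX : Xᵀ = X) (h : K * X + X * K = 0) : X = 0 := by
  have hKX : K * X = -(X * K) := eq_neg_of_add_eq_zero_left h
  have ht : trace (X * K * X) = 0 := by
    have h1 : X * K * X = -(X * (X * K)) := by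
      rw [mul_assoc, hKX, mul_neg]
    have h2 : trace (X * (X * K)) = trace (X * K * X) := by
      rw [trace_mul_comm, mul_assoc]
    have := congrArg trace h1
    rw [trace_neg, h2] at this
    linarith
  have hsym : ∀ a b, X a b = X b a := fun a b => by
    rw [← congrFun (congrFun hX a) b, transpose_apply]
  have key : ∀ j, (X * K * X) j j = dotProduct (fun i => X i j) (K *ᵥ fun i => X i j) := by
    intro j
    simp only [Matrix.mul_apply, dotProduct, Matrix.mulVec, Finset.sum_mul, Finset.mul_sum]
    rw [Finset.sum_comm]
    refine Finset.sum_congr rfl fun i _ => Finset.sum_congr rfl fun k _ => ?_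
    rw [hsym j i]; ring
  have hnn : ∀ j, 0 ≤ (X * K * X) j j := by
    intro j
    rw [key j]
    simpa using hK.posSemidef.dotProduct_mulVec_nonneg (fun i => X i j)
  have hz : ∀ j, (X * K * X) j j = 0 := by
    intro j
    have hsum : ∑ j, (X * K * X) j j = 0 := ht
    exact (Finset.sum_eq_zero_iff_of_nonneg (fun i _ => hnn i)).mp hsum j (Finset.mem_univ j)
  ext i j
  by_contra hij
  have hv : (fun i => X i j) ≠ 0 := by
    intro hv0
    exact hij (by simpa using congrFun hv0 i)
  have := hK.dotProduct_mulVec_pos hv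
  simp only [star_trivial] at this
  rw [← key j] at this
  exact absurd (hz j) (by linarith)

theorem commute_iff_commute {n : ℕ} (K T S : Matrix (Fin n) (Fin n) ℝ) (k_B : ℝ)
    (hK : K.PosDef) (hT : T.PosDef) (hkB : 0 < k_B) (hS : S.PosDef)
    (hlyap : K * S + S * K = (2 * k_B) • T) :
    (K * S = S * K ↔ K * T = T * K) ∧
    (K * S = S * K → S = k_B • (T * K⁻¹)) := by
  have hKdet : IsUnit K.det := hK.det_pos.ne'.isUnit
  have hKinv : K * K⁻¹ = 1 := mul_nonsing_inv K hKdet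
  have hinvK : K⁻¹ * K = 1 := nonsing_inv_mul K hKdet
  have fwd : K * S = S * K → K * S = k_B • T := by
    intro hc
    have h2 : (2 : ℝ) • (K * S) = (2 * k_B) • T := by
      rw [two_smul]; rw [← hlyap, hc]
    have := congrArg (fun M => (2⁻¹ : ℝ) • M) h2
    simpa [smul_smul, mul_assoc, mul_comm, mul_left_comm] using this
  have fwdT : K * S = S * K → K * T = T * K := by
    intro hc
    have h1 : K * S = k_B • T := fwd hc
    have hSK : S * K = k_B • T := by rw [← hc, h1]
    have h2 : k_B • (K * T) = k_B • (T * K) := by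
      rw [← mul_smul_comm, ← smul_mul_assoc, ← hSK, ← mul_assoc, hc]
    exact smul_right_injective (Matrix (Fin n) (Fin n) ℝ) hkB.ne' h2
  have hcommOf : K * T = T * K → K⁻¹ * T = T * K⁻¹ := by
    intro hKT
    calc K⁻¹ * T = K⁻¹ * (T * (K * K⁻¹)) := by rw [hKinv, mul_one]
      _ = K⁻¹ * (K * (T * K⁻¹)) := by rw [← mul_assoc T K, ← hKT, mul_assoc]
      _ = T * K⁻¹ := by rw [← mul_assoc, hinvK, one_mul]
  have fwdS : K * S = S * K → S = k_B • (T * K⁻¹) := by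
    intro hc
    have h1 : K * S = k_B • T := fwd hc
    have hcomm : K⁻¹ * T = T * K⁻¹ := hcommOf (fwdT hc)
    have : K⁻¹ * (K * S) = K⁻¹ * (k_B • T) := by rw [h1]
    rw [← mul_assoc, hinvK, one_mul] at this
    rw [this, mul_smul_comm, hcomm]
  have bwd : K * T = T * K → K * S = S * K := by
    intro hKT
    have hcomm : K⁻¹ * T = T * K⁻¹ := hcommOf hKT
    set S' : Matrix (Fin n) (Fin n) ℝ := k_B • (T * K⁻¹) with hS'
    have hKTK : K * (T * K⁻¹) = T := by
      rw [← mul_assoc, hKT, mul_assoc, hKinv, mul_one]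
    have hTKK : T * K⁻¹ * K = T := by
      rw [mul_assoc, hinvK, mul_one]
    have hlyap' : K * S' + S' * K = (2 * k_B) • T := by
      rw [hS', mul_smul_comm, smul_mul_assoc, hKTK, hTKK, ← add_smul]
      norm_num [two_mul, add_smul]
    have hXeq : K * (S - S') + (S - S') * K = 0 := by
      have : K * S + S * K - (K * S' + S' * K) = 0 := by
        rw [hlyap, hlyap', sub_self]
      rw [← this]
      noncomm_ring
    have hXsym : (S - S')ᵀ = S - S' := by
      have hSsym : Sᵀ = S := by
        have := hS.1
        rwa [IsHermitian, conjTranspose_eq_transpose_of_trivial] at this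
      have hTsym : Tᵀ = T := by
        have := hT.1
        rwa [IsHermitian, conjTranspose_eq_transpose_of_trivial] at this
      have hKsym : Kᵀ = K := by
        have := hK.1
        rwa [IsHermitian, conjTranspose_eq_transpose_of_trivial] at this
      have hKinvsym : (K⁻¹)ᵀ = K⁻¹ := by
        rw [transpose_nonsing_inv, hKsym]
      rw [transpose_sub, hSsym, hS', transpose_smul, transpose_mul, hKinvsym, hTsym, hcomm]
    have hz : S - S' = 0 := lyap_zero K (S - S') hK hXsym hXeq
    have hSS' : S = S' := sub_eq_zero.mp hz
    rw [hSS', hS', mul_smul_comm, smul_mul_assoc, hKTK, hTKK]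
  exact ⟨⟨fwdT, bwd⟩, fwdS⟩
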